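/- Suppose 𝒱 is a topological category over Set whose symmetric monoidal structure is the cartesian one (𝒱, ×, 1), 𝒱 is cartesian closed, and the faithful topological functor |-| : 𝒱 → Set is represented by the terminal object 1. Then the small subcategory of arities 𝕟_𝒮 ↪ 𝒱^𝒮 is eleutheric: for every object J of 𝕟_𝒮, the representable 𝒱-functor 𝒱^𝒮(J, −) : 𝒱^𝒮 → 𝒱 preserves colimits weighted by the weights 𝒱^𝒮(j−, X) : 𝕟_𝒮^op → 𝒱 for all X ∈ 𝒱^𝒮 (equivalently, it preserves 𝒱-enriched left Kan extensions along the inclusion j : 𝕟_𝒮 ↪ 𝒱^𝒮). -/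

import Mathlib

universe u

/-- A topological construct over `Set`: an amnestic concrete category over types,
presented by a class of structures on each type together with an admissibility
predicate on functions, in which every structured source has an initial lift and
every structured sink has a final lift (index types in `Type (u+1)` suffice for
all the "large" sources/sinks we consider). -/
structure TopConstruct : Type (u + 2) where
  Str : Type u → Type (u + 1)
  Adm : ∀ {X Y : Type u}, Str X → Str Y → (X → Y) → Prop
  adm_id : ∀ {X : Type u} (s : Str X), Adm s s id
  adm_comp : ∀ {X Y Z : Type u} {s : Str X} {t : Str Y} {r : Str Z} {f : X → Y} {g : Y → Z},
    Adm s t f → Adm t r g → Adm s r (g ∘ f)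
  amnestic : ∀ {X : Type u} (s t : Str X), Adm s t id → Adm t s id → s = t
  iLift : ∀ {X : Type u} {I : Type (u + 1)} (T : I → Type u) (t : ∀ i, Str (T i))
    (f : ∀ i, X → T i), Str X
  iLift_adm : ∀ {X : Type u} {I : Type (u + 1)} (T : I → Type u) (t : ∀ i, Str (T i))
    (f : ∀ i, X → T i) (i : I), Adm (iLift T t f) (t i) (f i)
  iLift_initial : ∀ {X : Type u} {I : Type (u + 1)} (T : I → Type u) (t : ∀ i, Str (T i))
    (f : ∀ i, X → T i) {W : Type u} (w : Str W) (g : W → X),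
    (∀ i, Adm w (t i) (fun x => f i (g x))) → Adm w (iLift T t f) g
  fLift : ∀ {X : Type u} {I : Type (u + 1)} (T : I → Type u) (t : ∀ i, Str (T i))
    (f : ∀ i, T i → X), Str X
  fLift_adm : ∀ {X : Type u} {I : Type (u + 1)} (T : I → Type u) (t : ∀ i, Str (T i))
    (f : ∀ i, T i → X) (i : I), Adm (t i) (fLift T t f) (f i)
  fLift_final : ∀ {X : Type u} {I : Type (u + 1)} (T : I → Type u) (t : ∀ i, Str (T i))
    (f : ∀ i, T i → X) {W : Type u} (w : Str W) (g : X → W),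
    (∀ i, Adm (t i) w (fun x => g (f i x))) → Adm (fLift T t f) w g

namespace TopConstruct

variable (V : TopConstruct.{u})

/-- The objects of the topological category `V`. -/
def Obj : Type (u + 1) := Σ X : Type u, V.Str X

/-- The fibre (partial) order over a fixed underlying set. -/
def fibLe {X : Type u} (s t : V.Str X) : Prop := V.Adm s t id

/-- Infima in the fibres (initial lift of a structured source of identities). -/
def fibInf {X : Type u} {I : Type (u + 1)} (s : I → V.Str X) : V.Str X :=
  V.iLift (fun _ => X) s fun _ => id

/-- Suprema in the fibres (final lift of a structured sink of identities). -/
def fibSup {X : Type u} {I : Type (u + 1)} (s : I → V.Str X) : V.Str X :=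
  V.fLift (fun _ => X) s fun _ => id

/-- Binary suprema in the fibres. -/
def fibSup2 {X : Type u} (s t : V.Str X) : V.Str X :=
  V.fibSup fun b : ULift.{u + 1} Bool => bif b.down then s else t

/-- Initial lift of a single structured map. -/
def iLift1 {X Y : Type u} (t : V.Str Y) (f : X → Y) : V.Str X :=
  V.iLift (I := PUnit.{u + 2}) (fun _ => Y) (fun _ => t) fun _ => f

/-- Final lift of a single structured map. -/
def fLift1 {X Y : Type u} (t : V.Str X) (f : X → Y) : V.Str Y :=
  V.fLift (I := PUnit.{u + 2}) (fun _ => X) (fun _ => t) fun _ => f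

/-- The indiscrete structure (top of the fibre). -/
def indisc (X : Type u) : V.Str X :=
  V.iLift (I := PEmpty.{u + 2}) (fun e => e.elim) (fun e => e.elim) fun e => e.elim

/-- The discrete structure (bottom of the fibre). -/
def disc (X : Type u) : V.Str X :=
  V.fLift (I := PEmpty.{u + 2}) (fun e => e.elim) (fun e => e.elim) fun e => e.elim

/-- The product structure on a finitely-indexed (or any `Type 0`-indexed) family. -/
def piStrF {I : Type} {T : I → Type u} (t : ∀ i, V.Str (T i)) : V.Str (∀ i, T i) :=
  V.iLift (I := ULift.{u + 1} I) (fun i => T i.down) (fun i => t i.down) fun i g => g i.down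

/-- The product structure on a `Type u`-indexed family. -/
def piStrU {I : Type u} {T : I → Type u} (t : ∀ i, V.Str (T i)) : V.Str (∀ i, T i) :=
  V.iLift (I := ULift.{u + 1} I) (fun i => T i.down) (fun i => t i.down) fun i g => g i.down

/-- The binary (cartesian) product structure. -/
def prodStr {X Y : Type u} (s : V.Str X) (t : V.Str Y) : V.Str (X × Y) :=
  V.iLift (I := ULift.{u + 1} Bool) (fun b => Bool.rec Y X b.down)
    (fun b => Bool.rec (motive := fun c => V.Str (Bool.rec Y X c)) t s b.down)
    (fun b => Bool.rec (motive := fun c => X × Y → Bool.rec Y X c) Prod.snd Prod.fst b.down)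

end TopConstruct

/-- Cartesian closedness of a topological construct, witnessed concretely:
each hom-set carries an exponential structure for which admissibility of a map
into the exponential is equivalent to admissibility of its uncurrying. -/
structure CartesianClosed (V : TopConstruct.{u}) : Type (u + 1) where
  exp : ∀ {X Y : Type u} (s : V.Str X) (t : V.Str Y), V.Str {f : X → Y // V.Adm s t f}
  adm_curry_iff : ∀ {X Y Z : Type u} (s : V.Str X) (t : V.Str Y) (c : V.Str Z)
    (g : Z → {f : X → Y // V.Adm s t f}),
    V.Adm c (exp s t) g ↔ V.Adm (V.prodStr c s) t fun p => (g p.1).1 p.2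

/-- A symmetric monoidal structure on a topological construct `V` for which the
forgetful functor to `Set` is strict symmetric monoidal with respect to the
cartesian structure on `Set`. -/
structure MonStr (V : TopConstruct.{u}) : Type (u + 1) where
  tens : ∀ {X Y : Type u}, V.Str X → V.Str Y → V.Str (X × Y)
  unitStr : V.Str PUnit.{u + 1}
  tens_adm : ∀ {X X' Y Y' : Type u} {s : V.Str X} {s' : V.Str X'} {t : V.Str Y} {t' : V.Str Y'}
    {f : X → X'} {g : Y → Y'}, V.Adm s s' f → V.Adm t t' g →
    V.Adm (tens s t) (tens s' t') (Prod.map f g)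
  swap_adm : ∀ {X Y : Type u} (s : V.Str X) (t : V.Str Y), V.Adm (tens s t) (tens t s) Prod.swap
  assoc_adm : ∀ {X Y Z : Type u} (s : V.Str X) (t : V.Str Y) (r : V.Str Z),
    V.Adm (tens (tens s t) r) (tens s (tens t r)) fun p => (p.1.1, (p.1.2, p.2))
  assoc_inv_adm : ∀ {X Y Z : Type u} (s : V.Str X) (t : V.Str Y) (r : V.Str Z),
    V.Adm (tens s (tens t r)) (tens (tens s t) r) fun p => ((p.1, p.2.1), p.2.2)
  lunit_adm : ∀ {X : Type u} (s : V.Str X), V.Adm (tens unitStr s) s Prod.snd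
  lunit_inv_adm : ∀ {X : Type u} (s : V.Str X), V.Adm s (tens unitStr s) fun x => (PUnit.unit, x)
  runit_adm : ∀ {X : Type u} (s : V.Str X), V.Adm (tens s unitStr) s Prod.fst
  runit_inv_adm : ∀ {X : Type u} (s : V.Str X), V.Adm s (tens s unitStr) fun x => (x, PUnit.unit)

/-- The statement that the symmetric monoidal structure `M` is the cartesian one. -/
def MonStr.IsCartesian {V : TopConstruct.{u}} (M : MonStr V) : Prop :=
  (∀ {X Y : Type u} (s : V.Str X) (t : V.Str Y), M.tens s t = V.prodStr s t) ∧
    M.unitStr = V.indisc PUnit.{u + 1}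
section Statement19

/-- `𝒮`-sorted morphisms of `𝒱^𝒮` (sortwise admissible functions). -/
def SHom {S : Type u} (V : TopConstruct.{u}) (X Y : S → V.Obj) : Type u :=
  ∀ s, {f : (X s).1 → (Y s).1 // V.Adm (X s).2 (Y s).2 f}

/-- Identity morphism of `𝒱^𝒮`. -/
def sId {S : Type u} (V : TopConstruct.{u}) (X : S → V.Obj) : SHom V X X :=
  fun _ => ⟨id, V.adm_id _⟩

/-- Composition of morphisms of `𝒱^𝒮`. -/
def sComp {S : Type u} {V : TopConstruct.{u}} {X Y Z : S → V.Obj}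
    (f : SHom V X Y) (g : SHom V Y Z) : SHom V X Z :=
  fun s => ⟨(g s).1 ∘ (f s).1, V.adm_comp (f s).2 (g s).2⟩

/-- The hom-object `𝒱^𝒮(X, Y) = ∏_{S∈𝒮} [X_S, Y_S]` of the tensored
`𝒱`-category `𝒱^𝒮`. -/
def sHomStr {S : Type u} (V : TopConstruct.{u}) (cc : CartesianClosed V)
    (X Y : S → V.Obj) : V.Str (SHom V X Y) :=
  V.piStrU fun s => cc.exp (X s).2 (Y s).2

/-- Objects of the subcategory of arities `𝕟_𝒮`: finitely supported families of
natural numbers indexed by the sorts. -/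
def NSort (S : Type u) : Type u := {J : S → ℕ // {s | J s ≠ 0}.Finite}

/-- The copower `n · 1` of the terminal object `1` of `𝒱` (the coproduct of `n`
copies of the indiscrete singleton, i.e. the final lift of the insertions). -/
def copow (V : TopConstruct.{u}) (n : ℕ) : V.Obj :=
  ⟨ULift.{u} (Fin n),
    V.fLift (I := ULift.{u + 1} (Fin n)) (fun _ => PUnit.{u + 1})
      (fun _ => V.indisc PUnit.{u + 1}) fun i _ => ULift.up i.down⟩

/-- The object `(n_S · 1)_{S ∈ 𝒮}` of `𝒱^𝒮` corresponding to an arity `J ∈ 𝕟_𝒮`. -/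
def toSObj (V : TopConstruct.{u}) {S : Type u} (J : NSort S) : S → V.Obj :=
  fun s => copow V (J.1 s)

/-- A `𝒱`-functor `D : 𝕟_𝒮 → 𝒱^𝒮`: an assignment on objects together with an
action on hom-sets that is admissible on hom-objects and preserves identities
and composition. -/
structure NFunctor (V : TopConstruct.{u}) (cc : CartesianClosed V) (S : Type u) :
    Type (u + 1) where
  obj : NSort S → (S → V.Obj)
  map : ∀ {J K : NSort S}, SHom V (toSObj V J) (toSObj V K) → SHom V (obj J) (obj K)
  map_adm : ∀ J K : NSort S,
    V.Adm (sHomStr V cc (toSObj V J) (toSObj V K)) (sHomStr V cc (obj J) (obj K))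
      fun f => map f
  map_id : ∀ J : NSort S, map (sId V (toSObj V J)) = sId V (obj J)
  map_comp : ∀ {J K L : NSort S} (f : SHom V (toSObj V J) (toSObj V K))
    (g : SHom V (toSObj V K) (toSObj V L)), map (sComp f g) = sComp (map f) (map g)

/-- The set of `𝒱`-natural transformations `𝒱^𝒮(j−, X) ⟹ 𝒱^𝒮(D−, Z)`:
sortwise admissible components satisfying `𝒱`-naturality. -/
def NatCar {S : Type u} (V : TopConstruct.{u}) (cc : CartesianClosed V)
    (D : NFunctor V cc S) (X Z : S → V.Obj) : Type u :=
  {α : ∀ J : NSort S,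
      {g : SHom V (toSObj V J) X → SHom V (D.obj J) Z //
        V.Adm (sHomStr V cc (toSObj V J) X) (sHomStr V cc (D.obj J) Z) g} //
    ∀ (J K : NSort S) (f : SHom V (toSObj V J) (toSObj V K)) (w : SHom V (toSObj V K) X),
      (α J).1 (sComp f w) = sComp (D.map f) ((α K).1 w)}

/-- The `𝒱`-object of `𝒱`-natural transformations `𝒱^𝒮(j−, X) ⟹ 𝒱^𝒮(D−, Z)`
(initial structure of the inclusion into the product of exponentials). -/
def natStr {S : Type u} (V : TopConstruct.{u}) (cc : CartesianClosed V)
    (D : NFunctor V cc S) (X Z : S → V.Obj) : V.Str (NatCar V cc D X Z) :=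
  V.iLift1
    (V.piStrU fun J : NSort S =>
      cc.exp (sHomStr V cc (toSObj V J) X) (sHomStr V cc (D.obj J) Z))
    fun α => α.1

/-- A cylinder `λ : 𝒱^𝒮(j−, X) ⟹ 𝒱^𝒮(D−, C)` exhibiting a candidate weighted
colimit `C` of `D` weighted by `𝒱^𝒮(j−, X)`. -/
structure Cyl {S : Type u} (V : TopConstruct.{u}) (cc : CartesianClosed V)
    (D : NFunctor V cc S) (X C : S → V.Obj) : Type u where
  lam : ∀ J : NSort S, SHom V (toSObj V J) X → SHom V (D.obj J) C
  adm : ∀ J : NSort S,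
    V.Adm (sHomStr V cc (toSObj V J) X) (sHomStr V cc (D.obj J) C) (lam J)
  natural : ∀ (J K : NSort S) (f : SHom V (toSObj V J) (toSObj V K))
    (w : SHom V (toSObj V K) X), lam J (sComp f w) = sComp (D.map f) (lam K w)

/-- The cylinder `c` exhibits `C` as the weighted colimit `𝒱^𝒮(j−, X) ∗ D` in
`𝒱^𝒮`: for every `Z`, the canonical map `𝒱^𝒮(C, Z) → Nat(𝒱^𝒮(j−, X), 𝒱^𝒮(D−, Z))`
is a bijection and an isomorphism in `𝒱` (it and its inverse are admissible). -/
def IsWColim {S : Type u} {V : TopConstruct.{u}} {cc : CartesianClosed V}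
    {D : NFunctor V cc S} {X C : S → V.Obj} (c : Cyl V cc D X C) : Prop :=
  ∀ Z : S → V.Obj,
    (∀ h h' : SHom V C Z,
      (∀ (J : NSort S) (w : SHom V (toSObj V J) X),
        sComp (c.lam J w) h = sComp (c.lam J w) h') → h = h') ∧
    (∀ α : NatCar V cc D X Z, ∃ h : SHom V C Z,
      ∀ (J : NSort S) (w : SHom V (toSObj V J) X),
        sComp (c.lam J w) h = (α.1 J).1 w) ∧
    (∀ Φ : SHom V C Z → NatCar V cc D X Z,
      (∀ h J w, ((Φ h).1 J).1 w = sComp (c.lam J w) h) →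
      V.Adm (sHomStr V cc C Z) (natStr V cc D X Z) Φ) ∧
    (∀ Ψ : NatCar V cc D X Z → SHom V C Z,
      (∀ α J w, sComp (c.lam J w) (Ψ α) = (α.1 J).1 w) →
      V.Adm (natStr V cc D X Z) (sHomStr V cc C Z) Ψ)

/-- The hom-set of `𝒱`. -/
def VHomSet (V : TopConstruct.{u}) (A B : V.Obj) : Type u :=
  {f : A.1 → B.1 // V.Adm A.2 B.2 f}

/-- The internal hom `[A, B]` of `𝒱`. -/
def vHomStr (V : TopConstruct.{u}) (cc : CartesianClosed V) (A B : V.Obj) :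
    V.Str (VHomSet V A B) :=
  cc.exp A.2 B.2

/-- The value of the representable `𝒱`-functor `T = 𝒱^𝒮(J₀, −) : 𝒱^𝒮 → 𝒱`. -/
def TObj (V : TopConstruct.{u}) (cc : CartesianClosed V) {S : Type u}
    (J₀ : NSort S) (C : S → V.Obj) : V.Obj :=
  ⟨SHom V (toSObj V J₀) C, sHomStr V cc (toSObj V J₀) C⟩

/-- The set of `𝒱`-natural transformations `𝒱^𝒮(j−, X) ⟹ 𝒱(T(D−), Y)` in `𝒱`,
for the composite diagram `T ∘ D` with `T = 𝒱^𝒮(J₀, −)`. -/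
def NatCarV {S : Type u} (V : TopConstruct.{u}) (cc : CartesianClosed V)
    (D : NFunctor V cc S) (X : S → V.Obj) (J₀ : NSort S) (Y : V.Obj) : Type u :=
  {α : ∀ K : NSort S,
      {g : SHom V (toSObj V K) X → VHomSet V (TObj V cc J₀ (D.obj K)) Y //
        V.Adm (sHomStr V cc (toSObj V K) X)
          (vHomStr V cc (TObj V cc J₀ (D.obj K)) Y) g} //
    ∀ (K K' : NSort S) (f : SHom V (toSObj V K) (toSObj V K'))
      (w : SHom V (toSObj V K') X) (u : SHom V (toSObj V J₀) (D.obj K)),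
      ((α K).1 (sComp f w)).1 u = ((α K').1 w).1 (sComp u (D.map f))}

/-- The `𝒱`-object of `𝒱`-natural transformations `𝒱^𝒮(j−, X) ⟹ 𝒱(T(D−), Y)`. -/
def natStrV {S : Type u} (V : TopConstruct.{u}) (cc : CartesianClosed V)
    (D : NFunctor V cc S) (X : S → V.Obj) (J₀ : NSort S) (Y : V.Obj) :
    V.Str (NatCarV V cc D X J₀ Y) :=
  V.iLift1
    (V.piStrU fun K : NSort S =>
      cc.exp (sHomStr V cc (toSObj V K) X) (vHomStr V cc (TObj V cc J₀ (D.obj K)) Y))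
    fun α => α.1



namespace Aux19

variable {V : TopConstruct.{u}}

theorem adm_to_indisc {A B : Type u} (s : V.Str A) (f : A → B) :
    V.Adm s (V.indisc B) f :=
  V.iLift_initial _ _ _ s f (fun i => i.elim)

variable (V) in
/-- `|-|` is represented by the terminal object. -/
def Rep : Prop := ∀ {X : Type u} (s : V.Str X) (x : X),
  V.Adm (V.indisc PUnit.{u + 1}) s fun _ => x

theorem adm_const (hrep : Rep V) {A B : Type u} (s : V.Str A) (t : V.Str B) (y : B) :
    V.Adm s t fun _ => y :=
  V.adm_comp (adm_to_indisc s fun _ => PUnit.unit) (hrep t y)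

theorem comp' {A B C : Type u} {s : V.Str A} {t : V.Str B} {r : V.Str C}
    {f : A → B} {g : B → C} (hf : V.Adm s t f) (hg : V.Adm t r g) :
    V.Adm s r fun x => g (f x) :=
  V.adm_comp hf hg

theorem pfst {A B : Type u} (s : V.Str A) (t : V.Str B) :
    V.Adm (V.prodStr s t) s Prod.fst :=
  V.iLift_adm _ _ _ (ULift.up true)

theorem psnd {A B : Type u} (s : V.Str A) (t : V.Str B) :
    V.Adm (V.prodStr s t) t Prod.snd :=
  V.iLift_adm _ _ _ (ULift.up false)

theorem pair {W A B : Type u} {w : V.Str W} {s : V.Str A} {t : V.Str B}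
    {f : W → A} {g : W → B} (hf : V.Adm w s f) (hg : V.Adm w t g) :
    V.Adm w (V.prodStr s t) fun x => (f x, g x) := by
  refine V.iLift_initial _ _ _ w _ ?_
  rintro ⟨b⟩
  cases b
  · exact hg
  · exact hf

theorem adm_eval (cc : CartesianClosed V) {A B : Type u} (s : V.Str A) (t : V.Str B) :
    V.Adm (V.prodStr (cc.exp s t) s) t fun p => (p.1).1 p.2 :=
  (cc.adm_curry_iff s t (cc.exp s t) id).mp (V.adm_id _)

theorem piF_adm {I : Type} {T : I → Type u} (t : ∀ i, V.Str (T i)) (i : I) :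
    V.Adm (V.piStrF t) (t i) fun g => g i :=
  V.iLift_adm _ _ _ (ULift.up i)

theorem piF_lift {I : Type} {T : I → Type u} {t : ∀ i, V.Str (T i)} {W : Type u}
    {w : V.Str W} {f : W → ∀ i, T i} (h : ∀ i, V.Adm w (t i) fun x => f x i) :
    V.Adm w (V.piStrF t) f :=
  V.iLift_initial _ _ _ w f fun i => h i.down

theorem piU_adm {I : Type u} {T : I → Type u} (t : ∀ i, V.Str (T i)) (i : I) :
    V.Adm (V.piStrU t) (t i) fun g => g i :=
  V.iLift_adm _ _ _ (ULift.up i)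

theorem piU_lift {I : Type u} {T : I → Type u} {t : ∀ i, V.Str (T i)} {W : Type u}
    {w : V.Str W} {f : W → ∀ i, T i} (h : ∀ i, V.Adm w (t i) fun x => f x i) :
    V.Adm w (V.piStrU t) f :=
  V.iLift_initial _ _ _ w f fun i => h i.down

theorem iLift1_adm {A B : Type u} (t : V.Str B) (f : A → B) :
    V.Adm (V.iLift1 t f) t f :=
  V.iLift_adm _ _ _ PUnit.unit

theorem iLift1_init {A B W : Type u} {t : V.Str B} {f : A → B} {w : V.Str W} {g : W → A}
    (h : V.Adm w t fun x => f (g x)) : V.Adm w (V.iLift1 t f) g :=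
  V.iLift_initial _ _ _ w g fun _ => h

end Aux19
namespace Aux19
variable {V : TopConstruct.{u}}

def fcase {n m : ℕ} {α : Sort*} (f : Fin n → α) (g : Fin m → α) : Fin (n + m) → α :=
  Fin.addCases f g

theorem fcase_left {n m : ℕ} {α : Sort*} (f : Fin n → α) (g : Fin m → α) (i : Fin n) :
    fcase f g (Fin.castAdd m i) = f i := Fin.addCases_left i

theorem fcase_right {n m : ℕ} {α : Sort*} (f : Fin n → α) (g : Fin m → α) (i : Fin m) :
    fcase f g (Fin.natAdd n i) = g i := Fin.addCases_right i

theorem fcase_elim {n m : ℕ} {P : Fin (n + m) → Prop} (h1 : ∀ i, P (Fin.castAdd m i))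
    (h2 : ∀ i, P (Fin.natAdd n i)) : ∀ a, P a := Fin.addCases h1 h2

theorem adm_from_copow (hrep : Rep V) {n : ℕ} {B : Type u} (t : V.Str B)
    (f : ULift.{u} (Fin n) → B) : V.Adm (copow V n).2 t f :=
  V.fLift_final _ _ _ t f fun i => hrep t (f (ULift.up i.down))

/-- Products distribute over the copower sink. -/
theorem admProdCopow (cc : CartesianClosed V) (hrep : Rep V) {W B : Type u}
    {w : V.Str W} {t : V.Str B} {n : ℕ} {F : W × ULift.{u} (Fin n) → B}
    (hF : ∀ i : Fin n, V.Adm w t fun x => F (x, ULift.up i)) :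
    V.Adm (V.prodStr w (copow V n).2) t F := by
  have hG : V.Adm (copow V n).2 (cc.exp w t)
      (fun j => (⟨fun x => F (x, j), by obtain ⟨j⟩ := j; exact hF j⟩ :
        {f : W → B // V.Adm w t f})) := by
    refine V.fLift_final _ _ _ _ _ fun i => ?_
    exact hrep (cc.exp w t) _
  have h2 := (cc.adm_curry_iff w t (copow V n).2 _).mp hG
  have h3 := comp' (pair (psnd w (copow V n).2) (pfst w (copow V n).2)) h2
  exact h3

theorem adm_ev (cc : CartesianClosed V) (hrep : Rep V) {S : Type u}
    (A Z : S → V.Obj) (s : S) (a : (A s).1) :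
    V.Adm (sHomStr V cc A Z) ((Z s).2) fun g => (g s).1 a := by
  have h1 : V.Adm (sHomStr V cc A Z) (cc.exp (A s).2 (Z s).2) fun g => g s :=
    piU_adm _ s
  have h2 := pair h1 (adm_const hrep (sHomStr V cc A Z) ((A s).2) a)
  exact comp' h2 (adm_eval cc _ _)

theorem shom_ext {S : Type u} {A B : S → V.Obj} {f g : SHom V A B}
    (h : ∀ s a, (f s).1 a = (g s).1 a) : f = g :=
  funext fun s => Subtype.ext (funext (h s))

/-- The empty arity. -/
def nZero (S : Type u) : NSort S :=
  ⟨fun _ => 0, Set.Finite.subset Set.finite_empty fun s hs => (hs rfl).elim⟩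

/-- Sum of arities. -/
def nAdd {S : Type u} (K L : NSort S) : NSort S :=
  ⟨fun s => K.1 s + L.1 s, Set.Finite.subset (K.2.union L.2) fun s hs => by
    simp only [Set.mem_union, Set.mem_setOf_eq] at *; omega⟩

variable (V) in
/-- Build a morphism out of a copower object: every function is admissible. -/
def mkSHom (hrep : Rep V) {S : Type u} (K : NSort S) (Z : S → V.Obj)
    (f : ∀ s, ULift.{u} (Fin (K.1 s)) → (Z s).1) : SHom V (toSObj V K) Z :=
  fun s => ⟨f s, adm_from_copow hrep _ _⟩

section
variable (hrep : Rep V) {S : Type u} {K K' K'' L : NSort S}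

variable (V K K') in
def nInl : SHom V (toSObj V K) (toSObj V (nAdd K K')) :=
  mkSHom V hrep K _ fun s j => ULift.up (Fin.castAdd (K'.1 s) j.down)

variable (V K K') in
def nInr : SHom V (toSObj V K') (toSObj V (nAdd K K')) :=
  mkSHom V hrep K' _ fun s j => ULift.up (Fin.natAdd (K.1 s) j.down)

variable (V) in
def nCop {Z : S → V.Obj} (w : SHom V (toSObj V K) Z) (w' : SHom V (toSObj V K') Z) :
    SHom V (toSObj V (nAdd K K')) Z :=
  mkSHom V hrep _ _ fun s j =>
    fcase (fun a => (w s).1 (ULift.up a)) (fun a => (w' s).1 (ULift.up a)) j.down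

variable (V) in
def nPlus (f : SHom V (toSObj V K) (toSObj V L))
    (g : SHom V (toSObj V K') (toSObj V K'')) :
    SHom V (toSObj V (nAdd K K')) (toSObj V (nAdd L K'')) :=
  mkSHom V hrep _ _ fun s j =>
    fcase (fun a => ULift.up (Fin.castAdd (K''.1 s) ((f s).1 (ULift.up a)).down))
      (fun a => ULift.up (Fin.natAdd (L.1 s) ((g s).1 (ULift.up a)).down)) j.down

variable (V K) in
def nFold : SHom V (toSObj V (nAdd K K)) (toSObj V K) :=
  mkSHom V hrep _ _ fun _ j => fcase (fun a => ULift.up a) (fun a => ULift.up a) j.down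

variable {Z : S → V.Obj} (w : SHom V (toSObj V K) Z) (w' : SHom V (toSObj V K') Z)

theorem sComp_apply {A B C : S → V.Obj} (f : SHom V A B) (g : SHom V B C) (s : S)
    (a : (A s).1) : (sComp f g s).1 a = (g s).1 ((f s).1 a) := rfl

theorem sId_apply (A : S → V.Obj) (s : S) (a : (A s).1) : (sId V A s).1 a = a := rfl

theorem mkSHom_apply (f : ∀ s, ULift.{u} (Fin (K.1 s)) → (Z s).1) (s : S)
    (j : ULift.{u} (Fin (K.1 s))) : (mkSHom V hrep K Z f s).1 j = f s j := rfl

theorem nInl_apply (s : S) (j : ULift.{u} (Fin (K.1 s))) :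
    (nInl V hrep K K' s).1 j = ULift.up (Fin.castAdd (K'.1 s) j.down) := rfl

theorem nInr_apply (s : S) (j : ULift.{u} (Fin (K'.1 s))) :
    (nInr V hrep K K' s).1 j = ULift.up (Fin.natAdd (K.1 s) j.down) := rfl

theorem nCop_apply (s : S) (j : ULift.{u} (Fin ((nAdd K K').1 s))) :
    (nCop V hrep w w' s).1 j =
      fcase (fun a => (w s).1 (ULift.up a)) (fun a => (w' s).1 (ULift.up a)) j.down := rfl

theorem nPlus_apply (f : SHom V (toSObj V K) (toSObj V L))
    (g : SHom V (toSObj V K') (toSObj V K'')) (s : S)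
    (j : ULift.{u} (Fin ((nAdd K K').1 s))) :
    (nPlus V hrep f g s).1 j =
      fcase (fun a => ULift.up (Fin.castAdd (K''.1 s) ((f s).1 (ULift.up a)).down))
        (fun a => ULift.up (Fin.natAdd (L.1 s) ((g s).1 (ULift.up a)).down)) j.down := rfl

theorem nFold_apply (s : S) (j : ULift.{u} (Fin ((nAdd K K).1 s))) :
    (nFold V hrep K s).1 j =
      fcase (fun a => ULift.up a) (fun a => ULift.up a) j.down := rfl

theorem fin_split {n m : ℕ} (a : Fin (n + m)) :
    (∃ i, a = Fin.castAdd m i) ∨ ∃ i, a = Fin.natAdd n i :=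
  fcase_elim (P := fun a => (∃ i, a = Fin.castAdd m i) ∨ ∃ i, a = Fin.natAdd n i)
    (fun i => Or.inl ⟨i, rfl⟩) (fun i => Or.inr ⟨i, rfl⟩) a

theorem inl_cop : sComp (nInl V hrep K K') (nCop V hrep w w') = w :=
  shom_ext fun s => by
    rintro ⟨a⟩
    exact fcase_left (fun a => (w s).1 (ULift.up a)) (fun a => (w' s).1 (ULift.up a)) a

theorem inr_cop : sComp (nInr V hrep K K') (nCop V hrep w w') = w' :=
  shom_ext fun s => by
    rintro ⟨a⟩
    exact fcase_right (fun a => (w s).1 (ULift.up a)) (fun a => (w' s).1 (ULift.up a)) a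

theorem plus_cop (f : SHom V (toSObj V K) (toSObj V L))
    (g : SHom V (toSObj V K') (toSObj V K''))
    (v : SHom V (toSObj V L) Z) (v' : SHom V (toSObj V K'') Z) :
    sComp (nPlus V hrep f g) (nCop V hrep v v') =
      nCop V hrep (sComp f v) (sComp g v') := by
  refine shom_ext fun s => ?_
  rintro ⟨a⟩
  obtain ⟨i, rfl⟩ | ⟨i, rfl⟩ := fin_split a <;>
    erw [sComp_apply, nPlus_apply, nCop_apply, nCop_apply] <;>
    simp only [ULift.up_down, ULift.down_up, sComp_apply, fcase_left, fcase_right] <;> rfl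

theorem inl_plus (f : SHom V (toSObj V K) (toSObj V L))
    (g : SHom V (toSObj V K') (toSObj V K'')) :
    sComp (nInl V hrep K K') (nPlus V hrep f g) = sComp f (nInl V hrep L K'') := by
  refine shom_ext fun s => ?_
  rintro ⟨a⟩
  exact fcase_left (fun a => ULift.up (Fin.castAdd (K''.1 s) ((f s).1 (ULift.up a)).down))
      (fun a => ULift.up (Fin.natAdd (L.1 s) ((g s).1 (ULift.up a)).down)) a

theorem inr_plus (f : SHom V (toSObj V K) (toSObj V L))
    (g : SHom V (toSObj V K') (toSObj V K'')) :
    sComp (nInr V hrep K K') (nPlus V hrep f g) = sComp g (nInr V hrep L K'') := by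
  refine shom_ext fun s => ?_
  rintro ⟨a⟩
  exact fcase_right (fun a => ULift.up (Fin.castAdd (K''.1 s) ((f s).1 (ULift.up a)).down))
      (fun a => ULift.up (Fin.natAdd (L.1 s) ((g s).1 (ULift.up a)).down)) a

theorem fold_cop : sComp (nFold V hrep K) w = nCop V hrep w w := by
  refine shom_ext fun s => ?_
  rintro ⟨a⟩
  obtain ⟨i, rfl⟩ | ⟨i, rfl⟩ := fin_split a <;>
    erw [sComp_apply, nFold_apply, nCop_apply] <;>
    simp only [ULift.up_down, ULift.down_up, sComp_apply, fcase_left, fcase_right]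

theorem inl_fold : sComp (nInl V hrep K K) (nFold V hrep K) = sId V (toSObj V K) := by
  refine shom_ext fun s => ?_
  rintro ⟨a⟩
  exact fcase_left (fun a => ULift.up a) (fun a => ULift.up a) a

theorem inr_fold : sComp (nInr V hrep K K) (nFold V hrep K) = sId V (toSObj V K) := by
  refine shom_ext fun s => ?_
  rintro ⟨a⟩
  exact fcase_right (fun a => ULift.up a) (fun a => ULift.up a) a

theorem sComp_id {A B : S → V.Obj} (f : SHom V A B) : sComp f (sId V B) = f :=
  shom_ext fun _ _ => rfl

theorem id_sComp {A B : S → V.Obj} (f : SHom V A B) : sComp (sId V A) f = f :=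
  shom_ext fun _ _ => rfl

theorem zero_unique (f g : SHom V (toSObj V (nZero S)) Z) : f = g :=
  shom_ext fun s => by rintro ⟨a⟩; exact a.elim0

end
end Aux19
namespace Aux19
variable {V : TopConstruct.{u}}

variable (V) in
def TupCar {S : Type u} {M : ℕ} (Z : S → V.Obj) (τ : Fin M → S) : Type u :=
  ∀ i, (Z (τ i)).1

variable (V) in
def tupStr {S : Type u} {M : ℕ} (Z : S → V.Obj) (τ : Fin M → S) :
    V.Str (TupCar V Z τ) :=
  V.piStrF fun i => (Z (τ i)).2

theorem tup_adm {S : Type u} {M : ℕ} (Z : S → V.Obj) (τ : Fin M → S) (i : Fin M) :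
    V.Adm (tupStr V Z τ) ((Z (τ i)).2) fun t => t i :=
  piF_adm _ i

theorem tup_lift {S : Type u} {M : ℕ} {Z : S → V.Obj} {τ : Fin M → S} {W : Type u}
    {w : V.Str W} {f : W → TupCar V Z τ}
    (h : ∀ i, V.Adm w ((Z (τ i)).2) fun x => f x i) : V.Adm w (tupStr V Z τ) f :=
  piF_lift h

section Ctx
variable {cc : CartesianClosed V} {S : Type u} {D : NFunctor V cc S}
  {X C : S → V.Obj} (c : Cyl V cc D X C)

theorem legs_surj (hc : IsWColim c) (s : S) (x : (C s).1) :
    ∃ (K : NSort S) (w : SHom V (toSObj V K) X) (d : (D.obj K s).1),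
      ((c.lam K w) s).1 d = x := by
  let Z : S → V.Obj := fun s => ⟨ULift.{u} Prop, V.indisc _⟩
  let h : SHom V C Z := fun s =>
    ⟨fun x => ULift.up (∃ K w d, ((c.lam K w) s).1 d = x), adm_to_indisc _ _⟩
  let h' : SHom V C Z := fun s => ⟨fun _ => ULift.up True, adm_to_indisc _ _⟩
  have key : h = h' := by
    refine (hc Z).1 h h' fun J w => shom_ext fun s d => ?_
    show ULift.up _ = ULift.up True
    exact congrArg ULift.up (propext ⟨fun _ => trivial, fun _ => ⟨J, w, d, rfl⟩⟩)
  have := congrFun (congrArg Subtype.val (congrFun key s)) x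
  exact of_eq_true (congrArg ULift.down this)

theorem exList (hrep : Rep V) (hc : IsWColim c) (l : List (Σ s : S, (C s).1)) :
    ∃ (K : NSort S) (w : SHom V (toSObj V K) X),
      ∀ p ∈ l, ∃ d : (D.obj K p.1).1, ((c.lam K w) p.1).1 d = p.2 := by
  induction l with
  | nil => exact ⟨nZero S, mkSHom V hrep _ _ fun s j => j.down.elim0, by simp⟩
  | cons p l ih =>
    obtain ⟨K, w, hK⟩ := ih
    obtain ⟨K₀, w₀, d₀, hd₀⟩ := legs_surj c hc p.1 p.2
    refine ⟨nAdd K₀ K, nCop V hrep w₀ w, ?_⟩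
    intro q hq
    rcases List.mem_cons.mp hq with rfl | hq
    · refine ⟨(D.map (nInl V hrep K₀ K) q.1).1 d₀, ?_⟩
      have h1 := congrFun (congrArg Subtype.val
        (congrFun (c.natural K₀ (nAdd K₀ K) (nInl V hrep K₀ K)
          (nCop V hrep w₀ w)) q.1)) d₀
      rw [sComp_apply] at h1
      rw [← h1, inl_cop, hd₀]
    · obtain ⟨d, hd⟩ := hK q hq
      refine ⟨(D.map (nInr V hrep K₀ K) q.1).1 d, ?_⟩
      have h1 := congrFun (congrArg Subtype.val
        (congrFun (c.natural K (nAdd K₀ K) (nInr V hrep K₀ K)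
          (nCop V hrep w₀ w)) q.1)) d
      rw [sComp_apply] at h1
      rw [← h1, inr_cop, hd]

theorem tupSurj (hrep : Rep V) (hc : IsWColim c) {M : ℕ} (τ : Fin M → S) (t : TupCar V C τ) :
    ∃ (K : NSort S) (w : SHom V (toSObj V K) X) (t' : TupCar V (D.obj K) τ),
      ∀ i, ((c.lam K w) (τ i)).1 (t' i) = t i := by
  obtain ⟨K, w, hK⟩ := exList c hrep hc (List.ofFn fun i => (⟨τ i, t i⟩ : Σ s, (C s).1))
  choose d hd using fun i : Fin M =>
    hK ⟨τ i, t i⟩ (by rw [List.mem_ofFn]; exact ⟨i, rfl⟩)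
  exact ⟨K, w, d, hd⟩

theorem ext_tup (hrep : Rep V) (hc : IsWColim c) {M : ℕ} {τ : Fin M → S} {A : Type u} {YC : Type u}
    {g g' : A × TupCar V C τ → YC}
    (h : ∀ (K : NSort S) (w : SHom V (toSObj V K) X) (a : A) (t : TupCar V (D.obj K) τ),
      g (a, fun i => ((c.lam K w) (τ i)).1 (t i)) =
        g' (a, fun i => ((c.lam K w) (τ i)).1 (t i))) :
    g = g' := by
  funext p
  obtain ⟨a, t⟩ := p
  obtain ⟨K, w, t', ht⟩ := tupSurj c hrep hc τ t
  have e : (fun i => ((c.lam K w) (τ i)).1 (t' i)) = t := funext ht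
  have := h K w a t'
  rwa [e] at this

end Ctx
end Aux19
namespace Aux19
variable {V : TopConstruct.{u}}

variable (V) in
def consTup {S : Type u} {N : ℕ} (Z : S → V.Obj) (τ : Fin (N + 1) → S)
    (x : (Z (τ 0)).1) (t : TupCar V Z fun i => τ i.succ) : TupCar V Z τ :=
  fun i => Fin.cases (motive := fun i => (Z (τ i)).1) x t i

theorem consTup_zero {S : Type u} {N : ℕ} (Z : S → V.Obj) (τ : Fin (N + 1) → S)
    (x : (Z (τ 0)).1) (t : TupCar V Z fun i => τ i.succ) :
    consTup V Z τ x t 0 = x := by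
  rfl

theorem consTup_succ {S : Type u} {N : ℕ} (Z : S → V.Obj) (τ : Fin (N + 1) → S)
    (x : (Z (τ 0)).1) (t : TupCar V Z fun i => τ i.succ) (j : Fin N) :
    consTup V Z τ x t j.succ = t j := by
  rfl

theorem consTup_eta {S : Type u} {N : ℕ} (Z : S → V.Obj) (τ : Fin (N + 1) → S)
    (t : TupCar V Z τ) :
    consTup V Z τ (t 0) (fun j => t j.succ) = t := by
  funext i
  induction i using Fin.cases with
  | zero => exact consTup_zero ..
  | succ j => exact consTup_succ ..

section Step
variable {cc : CartesianClosed V} (hrep : Rep V) {S : Type u} {D : NFunctor V cc S}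
  {X : S → V.Obj} {Y : V.Obj} {N : ℕ} (τ : Fin (N + 1) → S) {Bc : Type u}
  (β : ∀ K : NSort S, SHom V (toSObj V K) X → Bc × TupCar V (D.obj K) τ → Y.1)

/-- The β-family for the inductive step, with the first coordinate and the
`K`-data moved into the parameter. -/
def stepB (K K' : NSort S) (w' : SHom V (toSObj V K') X)
    (p : ((Bc × SHom V (toSObj V K) X) × (D.obj K (τ 0)).1) ×
      TupCar V (D.obj K') fun i => τ i.succ) : Y.1 :=
  β (nAdd K K') (nCop V hrep p.1.1.2 w')
    (p.1.1.1, consTup V (D.obj (nAdd K K')) τ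
      ((D.map (nInl V hrep K K') (τ 0)).1 p.1.2)
      (fun j => (D.map (nInr V hrep K K') (τ j.succ)).1 (p.2 j)))

/-- Joint admissibility of binary copairing on hom-objects. -/
theorem nCop_adm (cc : CartesianClosed V) (hrep : Rep V) {S : Type u}
    (K K' : NSort S) (A : S → V.Obj) :
    V.Adm (V.prodStr (sHomStr V cc (toSObj V K) A) (sHomStr V cc (toSObj V K') A))
      (sHomStr V cc (toSObj V (nAdd K K')) A) (fun p => nCop V hrep p.1 p.2) := by
  refine piU_lift fun s => ?_
  refine (cc.adm_curry_iff _ _ _ _).mpr ?_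
  refine admProdCopow cc hrep fun i => ?_
  obtain ⟨j, rfl⟩ | ⟨j, rfl⟩ := fin_split i
  · simp only [nCop_apply, ULift.down_up, fcase_left]
    have h1 := pfst (sHomStr V cc (toSObj V K) A) (sHomStr V cc (toSObj V K') A)
    exact comp' h1 (adm_ev cc hrep _ _ s _)
  · simp only [nCop_apply, ULift.down_up, fcase_right]
    have h1 := psnd (sHomStr V cc (toSObj V K) A) (sHomStr V cc (toSObj V K') A)
    exact comp' h1 (adm_ev cc hrep _ _ s _)

variable (b : V.Str Bc)

/-- Joint admissibility of the step family. -/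
theorem stepB_adm
    (hβ1 : ∀ K w, V.Adm (V.prodStr b (tupStr V (D.obj K) τ)) Y.2 (β K w))
    (hβ2 : ∀ K, V.Adm (sHomStr V cc (toSObj V K) X)
      (cc.exp (V.prodStr b (tupStr V (D.obj K) τ)) Y.2) fun w => ⟨β K w, hβ1 K w⟩)
    (K K' : NSort S) :
    V.Adm (V.prodStr (sHomStr V cc (toSObj V K') X)
        (V.prodStr (V.prodStr (V.prodStr b (sHomStr V cc (toSObj V K) X))
          ((D.obj K (τ 0)).2)) (tupStr V (D.obj K') fun i => τ i.succ)))
      Y.2 (fun q => stepB hrep τ β K K' q.1 q.2) := by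
  have hw' := pfst (sHomStr V cc (toSObj V K') X)
    (V.prodStr (V.prodStr (V.prodStr b (sHomStr V cc (toSObj V K) X))
      ((D.obj K (τ 0)).2)) (tupStr V (D.obj K') fun i => τ i.succ))
  have hrest := psnd (sHomStr V cc (toSObj V K') X)
    (V.prodStr (V.prodStr (V.prodStr b (sHomStr V cc (toSObj V K) X))
      ((D.obj K (τ 0)).2)) (tupStr V (D.obj K') fun i => τ i.succ))
  have hP := comp' hrest (pfst _ _)
  have hT := comp' hrest (psnd _ _)
  have hBH := comp' hP (pfst _ _)
  have hd := comp' hP (psnd _ _)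
  have hbc := comp' hBH (pfst _ _)
  have hwp := comp' hBH (psnd _ _)
  have hcop := comp' (pair hwp hw') (nCop_adm cc hrep K K' X)
  have hexp := comp' hcop (hβ2 (nAdd K K'))
  have htup : V.Adm
      (V.prodStr (sHomStr V cc (toSObj V K') X)
        (V.prodStr (V.prodStr (V.prodStr b (sHomStr V cc (toSObj V K) X))
          ((D.obj K (τ 0)).2)) (tupStr V (D.obj K') fun i => τ i.succ)))
      (tupStr V (D.obj (nAdd K K')) τ)
      (fun q => consTup V (D.obj (nAdd K K')) τ
        ((D.map (nInl V hrep K K') (τ 0)).1 q.2.1.2)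
        (fun j => (D.map (nInr V hrep K K') (τ j.succ)).1 (q.2.2 j))) := by
    refine tup_lift fun i => ?_
    induction i using Fin.cases with
    | zero =>
      show V.Adm _ _ fun q : _ × ((_ × _) × _) => (D.map (nInl V hrep K K') (τ 0)).1 q.2.1.2
      exact comp' hd ((D.map (nInl V hrep K K') (τ 0)).2)
    | succ j =>
      show V.Adm _ _ fun q : SHom V (toSObj V K') X × (((Bc × SHom V (toSObj V K) X) ×
          (D.obj K (τ 0)).1) × TupCar V (D.obj K') fun i => τ i.succ) => (D.map (nInr V hrep K K') (τ j.succ)).1 (q.2.2 j)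
      exact comp' (comp' hT (tup_adm _ _ j)) ((D.map (nInr V hrep K K') (τ j.succ)).2)
  exact comp' (pair hexp (pair hbc htup)) (adm_eval cc _ _)

end Step
end Aux19
namespace Aux19
variable {V : TopConstruct.{u}}

theorem shom_app {S : Type u} {A B : S → V.Obj} {f g : SHom V A B} (h : f = g)
    (s : S) (a : (A s).1) : (f s).1 a = (g s).1 a := by rw [h]

section Step2
variable {cc : CartesianClosed V} (hrep : Rep V) {S : Type u} {D : NFunctor V cc S}
  {X : S → V.Obj} {Y : V.Obj} {N : ℕ} (τ : Fin (N + 1) → S) {Bc : Type u}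
  (β : ∀ K : NSort S, SHom V (toSObj V K) X → Bc × TupCar V (D.obj K) τ → Y.1)

theorem dmap_pair {J K L : NSort S} (f : SHom V (toSObj V J) (toSObj V K))
    (g : SHom V (toSObj V K) (toSObj V L)) (s : S) (d : (D.obj J s).1) :
    (D.map g s).1 ((D.map f s).1 d) = (D.map (sComp f g) s).1 d :=
  (shom_app (D.map_comp f g) s d).symm

theorem dmap_id_apply (J : NSort S) (s : S) (d : (D.obj J s).1) :
    (D.map (sId V (toSObj V J)) s).1 d = d :=
  shom_app (D.map_id J) s d

variable (hβn : ∀ (J K : NSort S) (f : SHom V (toSObj V J) (toSObj V K)) (w) (b₀) (t),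
    β J (sComp f w) (b₀, t) = β K w (b₀, fun i => (D.map f (τ i)).1 (t i)))

include hβn

/-- Naturality of the step family in the inner variable. -/
theorem stepB_nat (K J' K' : NSort S) (f' : SHom V (toSObj V J') (toSObj V K'))
    (w' : SHom V (toSObj V K') X)
    (p : ((Bc × SHom V (toSObj V K) X) × (D.obj K (τ 0)).1) ×
      TupCar V (D.obj J') fun i => τ i.succ) :
    stepB hrep τ β K J' (sComp f' w') p =
      stepB hrep τ β K K' w' (p.1, fun j => (D.map f' (τ j.succ)).1 (p.2 j)) := by
  obtain ⟨⟨⟨bc, wp⟩, d⟩, t⟩ := p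
  have e1 : nCop V hrep wp (sComp f' w') =
      sComp (nPlus V hrep (sId V (toSObj V K)) f') (nCop V hrep wp w') := by
    rw [plus_cop, id_sComp]
  have e3 : (fun i => (D.map (nPlus V hrep (sId V (toSObj V K)) f') (τ i)).1
      (consTup V (D.obj (nAdd K J')) τ ((D.map (nInl V hrep K J') (τ 0)).1 d)
        (fun j => (D.map (nInr V hrep K J') (τ j.succ)).1 (t j)) i)) =
      consTup V (D.obj (nAdd K K')) τ ((D.map (nInl V hrep K K') (τ 0)).1 d)
        (fun j => (D.map (nInr V hrep K K') (τ j.succ)).1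
          ((D.map f' (τ j.succ)).1 (t j))) := by
    funext i
    induction i using Fin.cases with
    | zero =>
      erw [consTup_zero]
      rw [dmap_pair]
      exact shom_app (congrArg D.map ((inl_plus ..).trans (id_sComp _))) (τ 0) d
    | succ j =>
      erw [consTup_succ, consTup_succ]
      rw [dmap_pair, dmap_pair]
      exact shom_app (congrArg D.map (inr_plus ..)) (τ j.succ) (t j)
  show β (nAdd K J') (nCop V hrep wp (sComp f' w')) _ = _
  rw [e1, hβn, e3]
  rfl

/-- Naturality of the step family in the parameter variable. -/
theorem stepB_param (J K K' : NSort S) (f : SHom V (toSObj V J) (toSObj V K))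
    (w : SHom V (toSObj V K) X) (w' : SHom V (toSObj V K') X) (bc : Bc)
    (d : (D.obj J (τ 0)).1) (t : TupCar V (D.obj K') fun i => τ i.succ) :
    stepB hrep τ β J K' w' (((bc, sComp f w), d), t) =
      stepB hrep τ β K K' w' (((bc, w), (D.map f (τ 0)).1 d), t) := by
  have e1 : nCop V hrep (sComp f w) w' =
      sComp (nPlus V hrep f (sId V (toSObj V K'))) (nCop V hrep w w') := by
    rw [plus_cop, id_sComp]
  have e3 : (fun i => (D.map (nPlus V hrep f (sId V (toSObj V K'))) (τ i)).1
      (consTup V (D.obj (nAdd J K')) τ ((D.map (nInl V hrep J K') (τ 0)).1 d)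
        (fun j => (D.map (nInr V hrep J K') (τ j.succ)).1 (t j)) i)) =
      consTup V (D.obj (nAdd K K')) τ
        ((D.map (nInl V hrep K K') (τ 0)).1 ((D.map f (τ 0)).1 d))
        (fun j => (D.map (nInr V hrep K K') (τ j.succ)).1 (t j)) := by
    funext i
    induction i using Fin.cases with
    | zero =>
      erw [consTup_zero]
      rw [dmap_pair, dmap_pair]
      exact shom_app (congrArg D.map (inl_plus ..)) (τ 0) d
    | succ j =>
      erw [consTup_succ]
      rw [dmap_pair]
      exact shom_app (congrArg D.map ((inr_plus ..).trans (id_sComp _))) (τ j.succ) (t j)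
  show β (nAdd J K') (nCop V hrep (sComp f w) w') _ = _
  rw [e1, hβn, e3]
  rfl

/-- Evaluating the step family on the diagonal. -/
theorem stepB_diag (K : NSort S) (w : SHom V (toSObj V K) X) (bc : Bc)
    (d : (D.obj K (τ 0)).1) (t : TupCar V (D.obj K) fun i => τ i.succ) :
    stepB hrep τ β K K w (((bc, w), d), t) =
      β K w (bc, consTup V (D.obj K) τ d t) := by
  have e1 : nCop V hrep w w = sComp (nFold V hrep K) w := (fold_cop ..).symm
  have e3 : (fun i => (D.map (nFold V hrep K) (τ i)).1
      (consTup V (D.obj (nAdd K K)) τ ((D.map (nInl V hrep K K) (τ 0)).1 d)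
        (fun j => (D.map (nInr V hrep K K) (τ j.succ)).1 (t j)) i)) =
      consTup V (D.obj K) τ d t := by
    funext i
    induction i using Fin.cases with
    | zero =>
      erw [consTup_zero, consTup_zero]
      rw [dmap_pair, show sComp (nInl V hrep K K) (nFold V hrep K) = sId V (toSObj V K)
        from inl_fold .., dmap_id_apply]
    | succ j =>
      erw [consTup_succ, consTup_succ]
      rw [dmap_pair, show sComp (nInr V hrep K K) (nFold V hrep K) = sId V (toSObj V K)
        from inr_fold .., dmap_id_apply]
  show β (nAdd K K) (nCop V hrep w w) _ = _
  rw [e1, hβn, e3]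

end Step2
end Aux19
namespace Aux19
variable {V : TopConstruct.{u}}

variable (V) in
/-- The object of `𝒱^𝒮` concentrated (up to a propositional function space) at
the sort `s₀`, with value `A`. -/
def Zsort {S : Type u} (A : V.Obj) (s₀ : S) : S → V.Obj := fun s =>
  ⟨(s = s₀) → A.1,
    V.iLift (I := ULift.{u + 1} (PLift (s = s₀))) (fun _ => A.1) (fun _ => A.2)
      (fun hp g => g hp.down.down)⟩

theorem Zsort_adm_into {S : Type u} {A : V.Obj} {s₀ s : S} {W : Type u} {w : V.Str W}
    {f : W → ((s = s₀) → A.1)} (h : ∀ hp : s = s₀, V.Adm w A.2 fun x => f x hp) :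
    V.Adm w (Zsort V A s₀ s).2 f :=
  V.iLift_initial _ _ _ _ _ fun i => h i.down.down

theorem Zsort_adm_out {S : Type u} (A : V.Obj) (s₀ : S) :
    V.Adm (Zsort V A s₀ s₀).2 A.2 fun g => g rfl :=
  V.iLift_adm _ _ _ (ULift.up (PLift.up rfl))

section GammaSec
variable {cc : CartesianClosed V} {S : Type u} {D : NFunctor V cc S} {X C : S → V.Obj}

variable (cc C) in
/-- The internal hom `[B ⊗ (tail tuple object of C), Y]` as an object of `𝒱`. -/
def homObjA (Y : V.Obj) {N : ℕ} (τ : Fin (N + 1) → S) (Bc : Type u) (b : V.Str Bc) :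
    V.Obj :=
  ⟨{g : Bc × TupCar V C (fun i => τ i.succ) → Y.1 //
      V.Adm (V.prodStr b (tupStr V C fun i => τ i.succ)) Y.2 g},
    cc.exp (V.prodStr b (tupStr V C fun i => τ i.succ)) Y.2⟩

theorem gammaExists (hrep : Rep V) (c : Cyl V cc D X C) (hc : IsWColim c) (Y : V.Obj)
    {N : ℕ} (τ : Fin (N + 1) → S) (Bc : Type u) (b : V.Str Bc)
    (hK : ∀ K : NSort S,
      ((Bc × SHom V (toSObj V K) X) × (D.obj K (τ 0)).1) ×
        TupCar V C (fun i => τ i.succ) → Y.1)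
    (hKadm : ∀ K, V.Adm (V.prodStr (V.prodStr (V.prodStr b
      (sHomStr V cc (toSObj V K) X)) ((D.obj K (τ 0)).2))
      (tupStr V C fun i => τ i.succ)) Y.2 (hK K))
    (hKnat : ∀ (J K : NSort S) (f : SHom V (toSObj V J) (toSObj V K))
      (w : SHom V (toSObj V K) X) (d : (D.obj J (τ 0)).1),
      (fun p : Bc × TupCar V C (fun i => τ i.succ) =>
          hK J (((p.1, sComp f w), d), p.2)) =
        fun p => hK K (((p.1, w), (D.map f (τ 0)).1 d), p.2)) :
    ∃ γ : NatCar V cc D X (Zsort V (homObjA cc C Y τ Bc b) (τ 0)),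
      ∀ (K : NSort S) (w : SHom V (toSObj V K) X) (d : (D.obj K (τ 0)).1)
        (p : Bc × TupCar V C (fun i => τ i.succ)),
        ((((γ.1 K).1 w (τ 0)).1 d rfl).1 : Bc × TupCar V C (fun i => τ i.succ) → Y.1) p =
          hK K (((p.1, w), d), p.2) := by
  have hginner : ∀ (K : NSort S) (w : SHom V (toSObj V K) X) (d : (D.obj K (τ 0)).1),
      V.Adm (V.prodStr b (tupStr V C fun i => τ i.succ)) Y.2
        (fun p => hK K (((p.1, w), d), p.2)) := by
    intro K w d
    have h1 := pair (pair (pair (pfst b (tupStr V C fun i => τ i.succ))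
      (adm_const hrep _ (sHomStr V cc (toSObj V K) X) w)) (adm_const hrep _ ((D.obj K (τ 0)).2) d))
      (psnd b (tupStr V C fun i => τ i.succ))
    have h2 := comp' h1 (hKadm K)
    exact h2
  refine ⟨⟨fun K => ⟨fun w s =>
    ⟨fun d hp => ⟨fun p => hK K (((p.1, w), hp ▸ d), p.2), ?_⟩, ?_⟩, ?_⟩, ?_⟩,
    fun K w d p => rfl⟩
  · -- the inner value is admissible
    subst hp
    exact hginner K w d
  · -- the component at sort `s` is admissible
    refine Zsort_adm_into fun hp => ?_
    subst hp
    refine (cc.adm_curry_iff _ _ _ _).mpr ?_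
    have h1 := pair (pair (pair
      (comp' (psnd ((D.obj K (τ 0)).2)
        (V.prodStr b (tupStr V C fun i => τ i.succ))) (pfst _ _))
      (adm_const hrep _ (sHomStr V cc (toSObj V K) X) w))
      (pfst ((D.obj K (τ 0)).2) (V.prodStr b (tupStr V C fun i => τ i.succ))))
      (comp' (psnd _ _) (psnd _ _))
    have h2 := comp' h1 (hKadm K)
    exact h2
  · -- admissibility in `w`
    refine piU_lift fun s => ?_
    refine (cc.adm_curry_iff _ _ _ _).mpr ?_
    refine Zsort_adm_into fun hp => ?_
    subst hp
    refine (cc.adm_curry_iff _ _ _ _).mpr ?_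
    have h1 := pair (pair (pair
      (comp' (psnd (V.prodStr (sHomStr V cc (toSObj V K) X) ((D.obj K (τ 0)).2))
        (V.prodStr b (tupStr V C fun i => τ i.succ))) (pfst _ _))
      (comp' (pfst (V.prodStr (sHomStr V cc (toSObj V K) X) ((D.obj K (τ 0)).2))
        (V.prodStr b (tupStr V C fun i => τ i.succ))) (pfst _ _)))
      (comp' (pfst _ _) (psnd _ _)))
      (comp' (psnd _ _) (psnd _ _))
    have h2 := comp' h1 (hKadm K)
    exact h2
  · -- naturality
    intro J K f w
    refine shom_ext fun s d => ?_
    funext hp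
    subst hp
    refine Subtype.ext ?_
    exact hKnat J K f w d

end GammaSec
end Aux19
namespace Aux19
section MainL
variable {V : TopConstruct.{u}} {cc : CartesianClosed V} {S : Type u}
  {D : NFunctor V cc S} {X C : S → V.Obj}

/-- Key lemma: admissible multilinear extensions along the cylinder legs exist,
by induction on the number of tuple coordinates. -/
theorem mainExt (hrep : Rep V) (c : Cyl V cc D X C) (hc : IsWColim c) (Y : V.Obj) :
    ∀ (M : ℕ) (τ : Fin M → S) (Bc : Type u) (b : V.Str Bc)
      (β : ∀ K : NSort S, SHom V (toSObj V K) X → Bc × TupCar V (D.obj K) τ → Y.1)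
      (hβ1 : ∀ K w, V.Adm (V.prodStr b (tupStr V (D.obj K) τ)) Y.2 (β K w))
      (_ : ∀ K, V.Adm (sHomStr V cc (toSObj V K) X)
        (cc.exp (V.prodStr b (tupStr V (D.obj K) τ)) Y.2) fun w => ⟨β K w, hβ1 K w⟩)
      (_ : ∀ (J K : NSort S) (f : SHom V (toSObj V J) (toSObj V K)) (w) (b₀) (t),
        β J (sComp f w) (b₀, t) = β K w (b₀, fun i => (D.map f (τ i)).1 (t i))),
      ∃ h : Bc × TupCar V C τ → Y.1,
        V.Adm (V.prodStr b (tupStr V C τ)) Y.2 h ∧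
        ∀ (K : NSort S) (w : SHom V (toSObj V K) X) (b₀ : Bc)
          (t : TupCar V (D.obj K) τ),
          h (b₀, fun i => ((c.lam K w) (τ i)).1 (t i)) = β K w (b₀, t) := by
  intro M
  induction M with
  | zero =>
    intro τ Bc b β hβ1 hβ2 hβn
    refine ⟨fun p => β (nZero S) (mkSHom V hrep _ _ fun s j => j.down.elim0)
      (p.1, fun i => i.elim0), ?_, ?_⟩
    · have h1 : V.Adm (V.prodStr b (tupStr V C τ))
          (V.prodStr b (tupStr V (D.obj (nZero S)) τ))
          (fun p => (p.1, fun i => i.elim0)) :=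
        pair (pfst _ _) (tup_lift fun i => i.elim0)
      exact comp' h1 (hβ1 _ _)
    · intro K w b₀ t
      have e1 : sComp (mkSHom V hrep (nZero S) (toSObj V K) fun s j => j.down.elim0) w
          = mkSHom V hrep (nZero S) X fun s j => j.down.elim0 := zero_unique _ _
      have h2 := hβn (nZero S) K (mkSHom V hrep _ _ fun s j => j.down.elim0) w b₀
        (fun i => i.elim0)
      rw [e1] at h2
      refine h2.trans ?_
      exact congrArg (fun z => β K w (b₀, z)) (funext fun i => i.elim0)
  | succ N ih =>
    intro τ Bc b β hβ1 hβ2 hβn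
    -- Step 1: extensions in the remaining coordinates, with parameters.
    have H : ∀ K : NSort S,
        ∃ h : ((Bc × SHom V (toSObj V K) X) × (D.obj K (τ 0)).1) ×
          TupCar V C (fun i => τ i.succ) → Y.1,
        V.Adm (V.prodStr (V.prodStr (V.prodStr b (sHomStr V cc (toSObj V K) X))
          ((D.obj K (τ 0)).2)) (tupStr V C fun i => τ i.succ)) Y.2 h ∧
        ∀ (K' : NSort S) (w' : SHom V (toSObj V K') X) (b₀)
          (t' : TupCar V (D.obj K') fun i => τ i.succ),
          h (b₀, fun i => ((c.lam K' w') (τ i.succ)).1 (t' i)) =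
            stepB hrep τ β K K' w' (b₀, t') := by
      intro K
      have hb1 : ∀ (K' : NSort S) (w' : SHom V (toSObj V K') X),
          V.Adm (V.prodStr (V.prodStr (V.prodStr b (sHomStr V cc (toSObj V K) X))
            ((D.obj K (τ 0)).2)) (tupStr V (D.obj K') fun i => τ i.succ)) Y.2
            (stepB hrep τ β K K' w') := by
        intro K' w'
        have h1 := pair (adm_const hrep (V.prodStr (V.prodStr (V.prodStr b
          (sHomStr V cc (toSObj V K) X)) ((D.obj K (τ 0)).2))
          (tupStr V (D.obj K') fun i => τ i.succ)) (sHomStr V cc (toSObj V K') X) w')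
          (V.adm_id _)
        have h2 := comp' h1 (stepB_adm hrep τ β b hβ1 hβ2 K K')
        exact h2
      refine ih (fun i => τ i.succ)
        ((Bc × SHom V (toSObj V K) X) × (D.obj K (τ 0)).1)
        (V.prodStr (V.prodStr b (sHomStr V cc (toSObj V K) X)) ((D.obj K (τ 0)).2))
        (fun K' w' => stepB hrep τ β K K' w') hb1
        (fun K' => (cc.adm_curry_iff _ _ _ _).mpr (stepB_adm hrep τ β b hβ1 hβ2 K K'))
        (fun J' K' f' w' b₀ t' => stepB_nat hrep τ β hβn K J' K' f' w' (b₀, t'))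
    choose hK hH using H
    have hKadm : ∀ K, _ := fun K => (hH K).1
    have hKlegs := fun K => (hH K).2
    -- Step 2: the auxiliary natural transformation γ and the induced morphism.
    have hknat : ∀ (J K : NSort S) (f : SHom V (toSObj V J) (toSObj V K))
        (w : SHom V (toSObj V K) X) (d : (D.obj J (τ 0)).1),
        (fun p : Bc × TupCar V C (fun i => τ i.succ) =>
            hK J (((p.1, sComp f w), d), p.2)) =
          fun p => hK K (((p.1, w), (D.map f (τ 0)).1 d), p.2) := by
      intro J K f w d
      refine ext_tup c hrep hc (A := Bc) fun K' w' a t' => ?_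
      refine ((hKlegs J) K' w' ((a, sComp f w), d) t').trans ?_
      refine (stepB_param hrep τ β hβn J K K' f w w' a d t').trans ?_
      exact ((hKlegs K) K' w' ((a, w), (D.map f (τ 0)).1 d) t').symm
    obtain ⟨γ, hγ⟩ := gammaExists hrep c hc Y τ Bc b hK hKadm hknat
    obtain ⟨ht, hht⟩ := (hc (Zsort V (homObjA cc C Y τ Bc b) (τ 0))).2.1 γ
    -- Step 3: assemble the extension.
    refine ⟨fun p => ((ht (τ 0)).1 (p.2 0) rfl).1 (p.1, fun j => p.2 j.succ), ?_, ?_⟩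
    · have hE0 := comp' (comp' (psnd b (tupStr V C τ)) (tup_adm C τ 0)) ((ht (τ 0)).2)
      have hE1 := comp' hE0 (Zsort_adm_out (homObjA cc C Y τ Bc b) (τ 0))
      have hE2 := pair (pfst b (tupStr V C τ))
        (comp' (psnd b (tupStr V C τ)) (tup_lift fun j => tup_adm C τ j.succ))
      have hE3 := comp' (pair hE1 hE2)
        (adm_eval cc (V.prodStr b (tupStr V C fun i => τ i.succ)) Y.2)
      exact hE3
    · intro K w b₀ t
      have h1 := congrFun (congrArg Subtype.val (congrFun (hht K w) (τ 0))) (t 0)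
      show ((sComp (c.lam K w) ht (τ 0)).1 (t 0) rfl).1
        (b₀, fun j => ((c.lam K w) (τ j.succ)).1 (t j.succ)) = β K w (b₀, t)
      rw [h1]
      refine (hγ K w (t 0) (b₀, fun j => ((c.lam K w) (τ j.succ)).1 (t j.succ))).trans ?_
      refine ((hKlegs K) K w ((b₀, w), t 0) (fun j => t j.succ)).trans ?_
      refine (stepB_diag hrep τ β hβn K w b₀ (t 0) (fun j => t j.succ)).trans ?_
      exact congrArg (fun z => β K w (b₀, z)) (consTup_eta (D.obj K) τ t)

end MainL
end Aux19
namespace Aux19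
variable {V : TopConstruct.{u}}

theorem exists_equiv_fin {S : Type u} (J₀ : NSort S) :
    ∃ n : ℕ, Nonempty ((Σ s : S, Fin (J₀.1 s)) ≃ Fin n) := by
  classical
  haveI : Fintype {s : S | J₀.1 s ≠ 0} := J₀.2.fintype
  let P' := Σ s : {s : S | J₀.1 s ≠ 0}, Fin (J₀.1 s.1)
  have eP : (Σ s : S, Fin (J₀.1 s)) ≃ P' :=
    { toFun := fun p => ⟨⟨p.1, Nat.pos_iff_ne_zero.mp p.2.pos⟩, p.2⟩
      invFun := fun p => ⟨p.1.1, p.2⟩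
      left_inv := fun p => rfl
      right_inv := fun p => rfl }
  exact ⟨Fintype.card P', ⟨eP.trans (Fintype.equivFin P')⟩⟩

section Pack
variable {cc : CartesianClosed V} {S : Type u} (J₀ : NSort S) {n : ℕ}
  (e : (Σ s : S, Fin (J₀.1 s)) ≃ Fin n)

/-- The sort assignment induced by an enumeration of the points of `J₀`. -/
def sigE : Fin n → S := fun i => (e.symm i).1

variable (Z : S → V.Obj)

def packF (v : SHom V (toSObj V J₀) Z) : TupCar V Z (sigE J₀ e) :=
  fun i => (v ((e.symm i).1)).1 (ULift.up (e.symm i).2)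

def unpackF (hrep : Rep V) (t : TupCar V Z (sigE J₀ e)) : SHom V (toSObj V J₀) Z :=
  mkSHom V hrep J₀ Z fun s j =>
    cast (congrArg (fun q : Σ s : S, Fin (J₀.1 s) => (Z q.1).1)
      (e.symm_apply_apply ⟨s, j.down⟩)) (t (e ⟨s, j.down⟩))

variable (hrep : Rep V)

theorem cast_eval_aux (v : SHom V (toSObj V J₀) Z) {q p : Σ s : S, Fin (J₀.1 s)}
    (h : q = p) :
    cast (congrArg (fun r : Σ s : S, Fin (J₀.1 s) => (Z r.1).1) h)
      ((v q.1).1 (ULift.up q.2)) = (v p.1).1 (ULift.up p.2) := by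
  cases h; rfl

theorem unpack_pack (v : SHom V (toSObj V J₀) Z) :
    unpackF J₀ e Z hrep (packF J₀ e Z v) = v := by
  refine shom_ext fun s a => ?_
  obtain ⟨j⟩ := a
  exact cast_eval_aux J₀ Z v (e.symm_apply_apply ⟨s, j⟩)

theorem pack_unpack_aux (t : TupCar V Z (sigE J₀ e)) {k i : Fin n} (hk : k = i)
    (pf : (Z ((e.symm k).1)).1 = (Z ((e.symm i).1)).1) : cast pf (t k) = t i := by
  cases hk; rfl

theorem pack_unpack (t : TupCar V Z (sigE J₀ e)) :
    packF J₀ e Z (unpackF J₀ e Z hrep t) = t := by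
  funext i
  exact pack_unpack_aux J₀ e Z t (e.apply_symm_apply i) _

theorem cast_comm_aux {Z' : S → V.Obj} (g : SHom V Z Z')
    {q p : Σ s : S, Fin (J₀.1 s)} (h : q = p) (x : (Z q.1).1) :
    cast (congrArg (fun r : Σ s : S, Fin (J₀.1 s) => (Z' r.1).1) h) ((g q.1).1 x) =
      (g p.1).1 (cast (congrArg (fun r : Σ s : S, Fin (J₀.1 s) => (Z r.1).1) h) x) := by
  cases h; rfl

theorem unpack_post {Z' : S → V.Obj} (g : SHom V Z Z') (t : TupCar V Z (sigE J₀ e)) :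
    unpackF J₀ e Z' hrep (fun i => (g (sigE J₀ e i)).1 (t i)) =
      sComp (unpackF J₀ e Z hrep t) g := by
  refine shom_ext fun s a => ?_
  obtain ⟨j⟩ := a
  exact cast_comm_aux J₀ Z g (e.symm_apply_apply ⟨s, j⟩) (t (e ⟨s, j⟩))

theorem pack_adm (hrep : Rep V) :
    V.Adm (sHomStr V cc (toSObj V J₀) Z) (tupStr V Z (sigE J₀ e))
      (packF J₀ e Z) :=
  tup_lift fun i => adm_ev cc hrep (toSObj V J₀) Z ((e.symm i).1)
    (ULift.up (e.symm i).2)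

theorem cast_adm {q p : Σ s : S, Fin (J₀.1 s)} (h : q = p) :
    V.Adm ((Z q.1).2) ((Z p.1).2)
      (fun x => cast (congrArg (fun r : Σ s : S, Fin (J₀.1 s) => (Z r.1).1) h) x) := by
  cases h; exact V.adm_id _

theorem unpack_adm :
    V.Adm (tupStr V Z (sigE J₀ e)) (sHomStr V cc (toSObj V J₀) Z)
      (unpackF J₀ e Z hrep) := by
  refine piU_lift fun s => ?_
  refine (cc.adm_curry_iff _ _ _ _).mpr ?_
  refine admProdCopow cc hrep fun j => ?_
  have h1 := comp' (tup_adm Z (sigE J₀ e) (e ⟨s, j⟩))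
    (cast_adm J₀ Z (e.symm_apply_apply ⟨s, j⟩))
  exact h1

end Pack
end Aux19
open Aux19 in
theorem statement19' (V : TopConstruct.{u}) (cc : CartesianClosed V)
    (hrep : ∀ {X : Type u} (s : V.Str X) (x : X),
      V.Adm (V.indisc PUnit.{u + 1}) s fun _ => x)
    (S : Type u) (J₀ : NSort S) (D : NFunctor V cc S) (X : S → V.Obj)
    (C : S → V.Obj) (c : Cyl V cc D X C) (hc : IsWColim c) :
    ∀ Y : V.Obj,
      (∀ h h' : VHomSet V (TObj V cc J₀ C) Y,
        (∀ (K : NSort S) (w : SHom V (toSObj V K) X)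
          (u : SHom V (toSObj V J₀) (D.obj K)),
          h.1 (sComp u (c.lam K w)) = h'.1 (sComp u (c.lam K w))) → h = h') ∧
      (∀ α : NatCarV V cc D X J₀ Y, ∃ h : VHomSet V (TObj V cc J₀ C) Y,
        ∀ (K : NSort S) (w : SHom V (toSObj V K) X)
          (u : SHom V (toSObj V J₀) (D.obj K)),
          h.1 (sComp u (c.lam K w)) = ((α.1 K).1 w).1 u) ∧
      (∀ Φ : VHomSet V (TObj V cc J₀ C) Y → NatCarV V cc D X J₀ Y,
        (∀ h K w u, (((Φ h).1 K).1 w).1 u = h.1 (sComp u (c.lam K w))) →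
        V.Adm (vHomStr V cc (TObj V cc J₀ C) Y) (natStrV V cc D X J₀ Y) Φ) ∧
      (∀ Ψ : NatCarV V cc D X J₀ Y → VHomSet V (TObj V cc J₀ C) Y,
        (∀ α K w u, (Ψ α).1 (sComp u (c.lam K w)) = ((α.1 K).1 w).1 u) →
        V.Adm (natStrV V cc D X J₀ Y) (vHomStr V cc (TObj V cc J₀ C) Y) Ψ) := by
  classical
  intro Y
  obtain ⟨n, ⟨e⟩⟩ := exists_equiv_fin J₀
  have hrep' : Rep V := fun {T} s x => hrep s x
  have hα1 : V.Adm (natStrV V cc D X J₀ Y) (V.piStrU fun K : NSort S =>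
      cc.exp (sHomStr V cc (toSObj V K) X) (vHomStr V cc (TObj V cc J₀ (D.obj K)) Y))
      (fun α => α.1) := iLift1_adm _ _
  have hβ1main : ∀ (K : NSort S) (w : SHom V (toSObj V K) X),
      V.Adm (V.prodStr (natStrV V cc D X J₀ Y)
        (tupStr V (D.obj K) (sigE J₀ e))) Y.2
        (fun p : NatCarV V cc D X J₀ Y × TupCar V (D.obj K) (sigE J₀ e) =>
          ((p.1.1 K).1 w).1 (unpackF J₀ e (D.obj K) hrep' p.2)) := by
    intro K w
    have hα2 := comp' hα1 (piU_adm _ K)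
    have hα3 := comp' (pair hα2 (adm_const hrep' _
      (sHomStr V cc (toSObj V K) X) w)) (adm_eval cc _ _)
    have h4 := comp' (pair
      (comp' (pfst (natStrV V cc D X J₀ Y) (tupStr V (D.obj K) (sigE J₀ e))) hα3)
      (comp' (psnd (natStrV V cc D X J₀ Y) (tupStr V (D.obj K) (sigE J₀ e)))
        (unpack_adm (cc := cc) J₀ e (D.obj K) hrep')))
      (adm_eval cc (sHomStr V cc (toSObj V J₀) (D.obj K)) Y.2)
    exact h4
  have hβ2main : ∀ K : NSort S, V.Adm (sHomStr V cc (toSObj V K) X)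
      (cc.exp (V.prodStr (natStrV V cc D X J₀ Y)
        (tupStr V (D.obj K) (sigE J₀ e))) Y.2)
      (fun w => ⟨fun p => ((p.1.1 K).1 w).1 (unpackF J₀ e (D.obj K) hrep' p.2),
        hβ1main K w⟩) := by
    intro K
    refine (cc.adm_curry_iff _ _ _ _).mpr ?_
    have hα2 := comp' hα1 (piU_adm _ K)
    have hq := psnd (sHomStr V cc (toSObj V K) X)
      (V.prodStr (natStrV V cc D X J₀ Y) (tupStr V (D.obj K) (sigE J₀ e)))
    have hαp := comp' (comp' hq (pfst _ _)) hα2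
    have hw := pfst (sHomStr V cc (toSObj V K) X)
      (V.prodStr (natStrV V cc D X J₀ Y) (tupStr V (D.obj K) (sigE J₀ e)))
    have hev1 := comp' (pair hαp hw) (adm_eval cc _ _)
    have hup := comp' (comp' hq (psnd _ _)) (unpack_adm (cc := cc) J₀ e (D.obj K) hrep')
    have hfin := comp' (pair hev1 hup)
      (adm_eval cc (sHomStr V cc (toSObj V J₀) (D.obj K)) Y.2)
    exact hfin
  have hβnmain : ∀ (J K : NSort S) (f : SHom V (toSObj V J) (toSObj V K))
      (w : SHom V (toSObj V K) X) (b₀ : NatCarV V cc D X J₀ Y)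
      (t : TupCar V (D.obj J) (sigE J₀ e)),
      ((b₀.1 J).1 (sComp f w)).1 (unpackF J₀ e (D.obj J) hrep' t) =
        ((b₀.1 K).1 w).1 (unpackF J₀ e (D.obj K) hrep'
          (fun i => (D.map f (sigE J₀ e i)).1 (t i))) := by
    intro J K f w b₀ t
    refine (b₀.2 J K f w (unpackF J₀ e (D.obj J) hrep' t)).trans ?_
    exact congrArg (fun z => ((b₀.1 K).1 w).1 z)
      (unpack_post J₀ e (D.obj J) hrep' (D.map f) t).symm
  obtain ⟨hbig, hbigadm, hbiglegs⟩ := mainExt hrep' c hc Y n (sigE J₀ e)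
    (NatCarV V cc D X J₀ Y) (natStrV V cc D X J₀ Y)
    (fun K w p => ((p.1.1 K).1 w).1 (unpackF J₀ e (D.obj K) hrep' p.2))
    hβ1main hβ2main hβnmain
  have factE : ∀ v : SHom V (toSObj V J₀) C, ∃ (K : NSort S)
      (w : SHom V (toSObj V K) X) (u : SHom V (toSObj V J₀) (D.obj K)),
      sComp u (c.lam K w) = v := by
    intro v
    obtain ⟨K, w, t', ht'⟩ := tupSurj c hrep' hc (sigE J₀ e) (packF J₀ e C v)
    refine ⟨K, w, unpackF J₀ e (D.obj K) hrep' t', ?_⟩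
    have hp : packF J₀ e C (sComp (unpackF J₀ e (D.obj K) hrep' t') (c.lam K w))
        = packF J₀ e C v := by
      funext i
      show ((c.lam K w) (sigE J₀ e i)).1
        (packF J₀ e (D.obj K) (unpackF J₀ e (D.obj K) hrep' t') i) = _
      rw [pack_unpack J₀ e (D.obj K) hrep' t']
      exact ht' i
    calc sComp (unpackF J₀ e (D.obj K) hrep' t') (c.lam K w)
        = unpackF J₀ e C hrep' (packF J₀ e C
            (sComp (unpackF J₀ e (D.obj K) hrep' t') (c.lam K w))) :=
          (unpack_pack J₀ e C hrep' _).symm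
      _ = unpackF J₀ e C hrep' (packF J₀ e C v) := congrArg _ hp
      _ = v := unpack_pack J₀ e C hrep' v
  refine ⟨?_, ?_, ?_, ?_⟩
  · -- injectivity
    intro h h' hhh
    refine Subtype.ext (funext fun v => ?_)
    obtain ⟨K, w, u, huv⟩ := factE v
    rw [← huv]
    exact hhh K w u
  · -- surjectivity
    intro α
    refine ⟨⟨fun v => hbig (α, packF J₀ e C v), ?_⟩, ?_⟩
    · have h1 := comp' (pair (adm_const hrep'
        (sHomStr V cc (toSObj V J₀) C) (natStrV V cc D X J₀ Y) α)
        (pack_adm (cc := cc) J₀ e C hrep')) hbigadm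
      exact h1
    · intro K w u
      refine (hbiglegs K w α (packF J₀ e (D.obj K) u)).trans ?_
      show ((α.1 K).1 w).1 (unpackF J₀ e (D.obj K) hrep'
        (packF J₀ e (D.obj K) u)) = _
      rw [unpack_pack J₀ e (D.obj K) hrep' u]
  · -- the comparison map is admissible
    intro Φ hΦ
    refine iLift1_init ?_
    refine piU_lift fun K => ?_
    refine (cc.adm_curry_iff _ _ _ _).mpr ?_
    refine (cc.adm_curry_iff _ _ _ _).mpr ?_
    have heq : (fun r : (VHomSet V (TObj V cc J₀ C) Y × SHom V (toSObj V K) X) ×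
        SHom V (toSObj V J₀) (D.obj K) => (((Φ r.1.1).1 K).1 r.1.2).1 r.2) =
        fun r => (r.1.1).1 (sComp r.2 (c.lam K r.1.2)) :=
      funext fun r => hΦ r.1.1 K r.1.2 r.2
    show V.Adm (V.prodStr (V.prodStr (vHomStr V cc (TObj V cc J₀ C) Y)
        (sHomStr V cc (toSObj V K) X)) (sHomStr V cc (toSObj V J₀) (D.obj K))) Y.2
      fun r => (((Φ r.1.1).1 K).1 r.1.2).1 r.2
    rw [heq]
    have hA := comp' (pfst (V.prodStr (vHomStr V cc (TObj V cc J₀ C) Y)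
      (sHomStr V cc (toSObj V K) X)) (sHomStr V cc (toSObj V J₀) (D.obj K)))
      (pfst _ _)
    have hB : V.Adm (V.prodStr (V.prodStr (vHomStr V cc (TObj V cc J₀ C) Y)
        (sHomStr V cc (toSObj V K) X)) (sHomStr V cc (toSObj V J₀) (D.obj K)))
        (sHomStr V cc (toSObj V J₀) C) (fun r => sComp r.2 (c.lam K r.1.2)) := by
      refine piU_lift fun s => ?_
      refine (cc.adm_curry_iff _ _ _ _).mpr ?_
      have hw' := comp' (pfst (V.prodStr (V.prodStr (vHomStr V cc (TObj V cc J₀ C) Y)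
        (sHomStr V cc (toSObj V K) X)) (sHomStr V cc (toSObj V J₀) (D.obj K)))
        ((toSObj V J₀ s).2)) (comp' (pfst _ _) (psnd _ _))
      have hlam := comp' (comp' hw' (c.adm K)) (piU_adm _ s)
      have hu1 := comp' (pfst (V.prodStr (V.prodStr (vHomStr V cc (TObj V cc J₀ C) Y)
        (sHomStr V cc (toSObj V K) X)) (sHomStr V cc (toSObj V J₀) (D.obj K)))
        ((toSObj V J₀ s).2)) (psnd _ _)
      have hu2 := comp' hu1 (piU_adm _ s)
      have hu3 := comp' (pair hu2 (psnd (V.prodStr (V.prodStr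
        (vHomStr V cc (TObj V cc J₀ C) Y) (sHomStr V cc (toSObj V K) X))
        (sHomStr V cc (toSObj V J₀) (D.obj K))) ((toSObj V J₀ s).2)))
        (adm_eval cc _ _)
      have hfin := comp' (pair hlam hu3) (adm_eval cc _ _)
      exact hfin
    have hfin2 := comp' (pair hA hB)
      (adm_eval cc (sHomStr V cc (toSObj V J₀) C) Y.2)
    exact hfin2
  · -- the inverse comparison map is admissible
    intro Ψ hΨ
    refine (cc.adm_curry_iff _ _ _ _).mpr ?_
    have heq : (fun q : NatCarV V cc D X J₀ Y × SHom V (toSObj V J₀) C =>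
        (Ψ q.1).1 q.2) = fun q => hbig (q.1, packF J₀ e C q.2) := by
      funext q
      obtain ⟨α, v⟩ := q
      obtain ⟨K, w, u, huv⟩ := factE v
      rw [← huv]
      refine (hΨ α K w u).trans ?_
      refine Eq.symm ?_
      refine (hbiglegs K w α (packF J₀ e (D.obj K) u)).trans ?_
      show ((α.1 K).1 w).1 (unpackF J₀ e (D.obj K) hrep'
        (packF J₀ e (D.obj K) u)) = _
      rw [unpack_pack J₀ e (D.obj K) hrep' u]
    show V.Adm (V.prodStr (natStrV V cc D X J₀ Y) (sHomStr V cc (toSObj V J₀) C))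
      Y.2 fun q => (Ψ q.1).1 q.2
    rw [heq]
    have h1 := comp' (pair (pfst (natStrV V cc D X J₀ Y)
      (sHomStr V cc (toSObj V J₀) C)) (comp' (psnd _ _)
      (pack_adm (cc := cc) J₀ e C hrep'))) hbigadm
    exact h1

/-- Suppose `𝒱` is a topological category over `Set` whose
symmetric monoidal structure is the cartesian one, `𝒱` is cartesian closed, and
the topological functor `|-| : 𝒱 → Set` is represented by the terminal object
`1`.  Then the small subcategory of arities `𝕟_𝒮 ↪ 𝒱^𝒮` is *eleutheric*: for
every object `J₀` of `𝕟_𝒮`, the representable `𝒱`-functor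
`𝒱^𝒮(J₀, −) : 𝒱^𝒮 → 𝒱` preserves colimits weighted by the weights
`𝒱^𝒮(j−, X)` for all `X ∈ 𝒱^𝒮`: whenever a cylinder exhibits `C` as
`𝒱^𝒮(j−, X) ∗ D` in `𝒱^𝒮`, its image under `𝒱^𝒮(J₀, −)` exhibits `𝒱^𝒮(J₀, C)`
as `𝒱^𝒮(j−, X) ∗ (𝒱^𝒮(J₀, D−))` in `𝒱`. -/
theorem statement19 (V : TopConstruct.{u}) (cc : CartesianClosed V)
    -- `|-|` is represented by the terminal object `1` (the indiscrete singleton):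
    (hrep : ∀ {X : Type u} (s : V.Str X) (x : X),
      V.Adm (V.indisc PUnit.{u + 1}) s fun _ => x)
    (S : Type u) (J₀ : NSort S) (D : NFunctor V cc S) (X : S → V.Obj)
    (C : S → V.Obj) (c : Cyl V cc D X C) (hc : IsWColim c) :
    ∀ Y : V.Obj,
      -- the canonical map `𝒱(𝒱^𝒮(J₀,C), Y) → Nat(𝒱^𝒮(j−,X), 𝒱(𝒱^𝒮(J₀,D−), Y))`
      -- induced by the image cylinder is injective, ...
      (∀ h h' : VHomSet V (TObj V cc J₀ C) Y,
        (∀ (K : NSort S) (w : SHom V (toSObj V K) X)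
          (u : SHom V (toSObj V J₀) (D.obj K)),
          h.1 (sComp u (c.lam K w)) = h'.1 (sComp u (c.lam K w))) → h = h') ∧
      -- ... surjective, ...
      (∀ α : NatCarV V cc D X J₀ Y, ∃ h : VHomSet V (TObj V cc J₀ C) Y,
        ∀ (K : NSort S) (w : SHom V (toSObj V K) X)
          (u : SHom V (toSObj V J₀) (D.obj K)),
          h.1 (sComp u (c.lam K w)) = ((α.1 K).1 w).1 u) ∧
      -- ... and an isomorphism in `𝒱`: it is admissible ...
      (∀ Φ : VHomSet V (TObj V cc J₀ C) Y → NatCarV V cc D X J₀ Y,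
        (∀ h K w u, (((Φ h).1 K).1 w).1 u = h.1 (sComp u (c.lam K w))) →
        V.Adm (vHomStr V cc (TObj V cc J₀ C) Y) (natStrV V cc D X J₀ Y) Φ) ∧
      -- ... with admissible inverse:
      (∀ Ψ : NatCarV V cc D X J₀ Y → VHomSet V (TObj V cc J₀ C) Y,
        (∀ α K w u, (Ψ α).1 (sComp u (c.lam K w)) = ((α.1 K).1 w).1 u) →
        V.Adm (natStrV V cc D X J₀ Y) (vHomStr V cc (TObj V cc J₀ C) Y) Ψ) := by
  exact statement19' V cc hrep S J₀ D X C c hc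


end Statement19
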